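/- For any finite families of operators A_t and B_t on finite-dimensional Hilbert spaces, the operator norm of the sum of tensor products satisfies ‖∑_t A_t ⊗ B_t†‖ ≤ sqrt(‖∑_t A_t† A_t‖) · sqrt(‖∑_t B_t† B_t‖), where ‖·‖ denotes the operator (spectral) norm. -/

import Mathlib

open scoped Kronecker Matrix Matrix.Norms.L2Operator

private lemma mulVec_sq_le' {n' m' : Type*} [Fintype n'] [Fintype m'] [DecidableEq n']
    [DecidableEq m'] (M : Matrix m' n' ℂ) (v : n' → ℂ) :
    ∑ i, ‖(M *ᵥ v) i‖ ^ 2 ≤ ‖M‖ ^ 2 * ∑ k, ‖v k‖ ^ 2 := by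
  have h := M.l2_opNorm_mulVec ((WithLp.equiv 2 (n' → ℂ)).symm v)
  rw [EuclideanSpace.norm_eq, EuclideanSpace.norm_eq] at h
  have h' : Real.sqrt (∑ i, ‖(M *ᵥ v) i‖ ^ 2) ≤ ‖M‖ * Real.sqrt (∑ k, ‖v k‖ ^ 2) := h
  have h1 : (0:ℝ) ≤ ∑ i, ‖(M *ᵥ v) i‖ ^ 2 := Finset.sum_nonneg fun _ _ => sq_nonneg _
  have h2 : (0:ℝ) ≤ ∑ k, ‖v k‖ ^ 2 := Finset.sum_nonneg fun _ _ => sq_nonneg _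
  calc ∑ i, ‖(M *ᵥ v) i‖ ^ 2 = Real.sqrt (∑ i, ‖(M *ᵥ v) i‖ ^ 2) ^ 2 := (Real.sq_sqrt h1).symm
    _ ≤ (‖M‖ * Real.sqrt (∑ k, ‖v k‖ ^ 2)) ^ 2 := pow_le_pow_left₀ (Real.sqrt_nonneg _) h' 2
    _ = ‖M‖ ^ 2 * ∑ k, ‖v k‖ ^ 2 := by rw [mul_pow, Real.sq_sqrt h2]

private lemma kron_one_mulVec' {n m : ℕ} (M : Matrix (Fin n) (Fin n) ℂ) (x : Fin n × Fin m → ℂ)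
    (i : Fin n) (j : Fin m) :
    ((M ⊗ₖ (1 : Matrix (Fin m) (Fin m) ℂ)) *ᵥ x) (i, j) = (M *ᵥ fun k => x (k, j)) i := by
  simp [Matrix.mulVec, dotProduct, Fintype.sum_prod_type, Matrix.one_apply, ite_mul,
    Finset.sum_ite_eq, mul_assoc]

private lemma one_kron_mulVec' {n m : ℕ} (M : Matrix (Fin m) (Fin m) ℂ) (x : Fin n × Fin m → ℂ)
    (i : Fin n) (j : Fin m) :
    (((1 : Matrix (Fin n) (Fin n) ℂ) ⊗ₖ M) *ᵥ x) (i, j) = (M *ᵥ fun l => x (i, l)) j := by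
  simp [Matrix.mulVec, dotProduct, Fintype.sum_prod_type, Matrix.one_apply, ite_mul,
    Finset.sum_ite_eq, mul_assoc]

set_option maxHeartbeats 1000000 in
private lemma sqrt_norm_bound' {n' m' : Type*} [Fintype n'] [Fintype m'] [DecidableEq n']
    [DecidableEq m'] (M : Matrix m' n' ℂ) (c : ℝ) (hc : 0 ≤ c)
    (h : ∀ x : EuclideanSpace ℂ n',
      ∑ p, ‖(M *ᵥ (x : n' → ℂ)) p‖ ^ 2 ≤ c ^ 2 * ∑ p, ‖(x : n' → ℂ) p‖ ^ 2) :
    ‖M‖ ≤ c := by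
  rw [Matrix.l2_opNorm_def]
  refine ContinuousLinearMap.opNorm_le_bound _ hc fun x => ?_
  have hy : ‖((Matrix.toEuclideanLin ≪≫ₗ LinearMap.toContinuousLinearMap) M) x‖
      = Real.sqrt (∑ p, ‖(M *ᵥ (x : n' → ℂ)) p‖ ^ 2) := by
    rw [EuclideanSpace.norm_eq]; rfl
  rw [hy, EuclideanSpace.norm_eq]
  calc Real.sqrt (∑ p, ‖(M *ᵥ (x : n' → ℂ)) p‖ ^ 2)
      ≤ Real.sqrt (c ^ 2 * ∑ p, ‖(x : n' → ℂ) p‖ ^ 2) := Real.sqrt_le_sqrt (h x)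
    _ = c * Real.sqrt (∑ p, ‖(x : n' → ℂ) p‖ ^ 2) := by
        rw [Real.sqrt_mul (sq_nonneg c), Real.sqrt_sq hc]

private lemma kron_one_norm_le' {n m : ℕ} (M : Matrix (Fin n) (Fin n) ℂ) :
    ‖M ⊗ₖ (1 : Matrix (Fin m) (Fin m) ℂ)‖ ≤ ‖M‖ := by
  refine sqrt_norm_bound' _ _ (norm_nonneg M) fun x => ?_
  calc ∑ p : Fin n × Fin m, ‖((M ⊗ₖ (1 : Matrix (Fin m) (Fin m) ℂ)) *ᵥ (x : Fin n × Fin m → ℂ)) p‖ ^ 2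
      = ∑ j : Fin m, ∑ i : Fin n, ‖(M *ᵥ fun k => (x : Fin n × Fin m → ℂ) (k, j)) i‖ ^ 2 := by
        rw [Fintype.sum_prod_type, Finset.sum_comm]
        exact Finset.sum_congr rfl fun j _ => Finset.sum_congr rfl fun i _ => by
          rw [kron_one_mulVec']
    _ ≤ ∑ j : Fin m, ‖M‖ ^ 2 * ∑ k : Fin n, ‖(x : Fin n × Fin m → ℂ) (k, j)‖ ^ 2 :=
        Finset.sum_le_sum fun j _ => mulVec_sq_le' M _
    _ = ‖M‖ ^ 2 * ∑ p : Fin n × Fin m, ‖(x : Fin n × Fin m → ℂ) p‖ ^ 2 := by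
        rw [← Finset.mul_sum, Fintype.sum_prod_type, Finset.sum_comm]

private lemma one_kron_norm_le' {n m : ℕ} (M : Matrix (Fin m) (Fin m) ℂ) :
    ‖(1 : Matrix (Fin n) (Fin n) ℂ) ⊗ₖ M‖ ≤ ‖M‖ := by
  refine sqrt_norm_bound' _ _ (norm_nonneg M) fun x => ?_
  calc ∑ p : Fin n × Fin m, ‖(((1 : Matrix (Fin n) (Fin n) ℂ) ⊗ₖ M) *ᵥ (x : Fin n × Fin m → ℂ)) p‖ ^ 2
      = ∑ i : Fin n, ∑ j : Fin m, ‖(M *ᵥ fun l => (x : Fin n × Fin m → ℂ) (i, l)) j‖ ^ 2 := by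
        rw [Fintype.sum_prod_type]
        exact Finset.sum_congr rfl fun i _ => Finset.sum_congr rfl fun j _ => by
          rw [one_kron_mulVec']
    _ ≤ ∑ i : Fin n, ‖M‖ ^ 2 * ∑ l : Fin m, ‖(x : Fin n × Fin m → ℂ) (i, l)‖ ^ 2 :=
        Finset.sum_le_sum fun i _ => mulVec_sq_le' M _
    _ = ‖M‖ ^ 2 * ∑ p : Fin n × Fin m, ‖(x : Fin n × Fin m → ℂ) p‖ ^ 2 := by
        rw [← Finset.mul_sum, Fintype.sum_prod_type]

/-- Generic block-row times block-column product. -/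
private lemma blockRow_mul_blockCol {ι a b c : Type*} [Fintype ι] [Fintype a] [Fintype b]
    [Fintype c] [DecidableEq ι] (M : ι → Matrix a b ℂ) (N : ι → Matrix b c ℂ) :
    (Matrix.of fun p (tq : ι × b) => M tq.1 p tq.2) *
      (Matrix.of fun (tp : ι × b) q => N tp.1 tp.2 q) = ∑ t, M t * N t := by
  ext p q
  rw [Matrix.mul_apply, Fintype.sum_prod_type, Matrix.sum_apply]
  exact Finset.sum_congr rfl fun t _ => (Matrix.mul_apply (M := M t) (N := N t)).symm

private lemma kron_conjTranspose' {a b c d : Type*} [Fintype a] [Fintype b] [Fintype c]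
    [Fintype d] (A : Matrix a b ℂ) (B : Matrix c d ℂ) : (A ⊗ₖ B)ᴴ = Aᴴ ⊗ₖ Bᴴ := by
  ext p q
  simp [Matrix.conjTranspose_apply, Matrix.kroneckerMap_apply]

private lemma sum_kron' {ι a b c d : Type*} [Fintype ι] (s : Finset ι) (C : ι → Matrix a b ℂ)
    (D : Matrix c d ℂ) : (∑ t ∈ s, C t) ⊗ₖ D = ∑ t ∈ s, C t ⊗ₖ D := by
  ext p q
  simp [Matrix.kroneckerMap_apply, Matrix.sum_apply, Finset.sum_mul]

private lemma kron_sum' {ι a b c d : Type*} [Fintype ι] (s : Finset ι) (C : Matrix a b ℂ)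
    (D : ι → Matrix c d ℂ) : C ⊗ₖ (∑ t ∈ s, D t) = ∑ t ∈ s, C ⊗ₖ D t := by
  ext p q
  simp [Matrix.kroneckerMap_apply, Matrix.sum_apply, Finset.mul_sum]

/-- Matrix Cauchy–Schwarz (Jocić): `‖∑ t, A t ⊗ₖ (B t)ᴴ‖ ≤ √‖∑ AᴴA‖ · √‖∑ BᴴB‖`,
where `‖·‖` is the L2 operator (spectral) norm. -/
theorem matrix_cauchy_schwarz_kronecker {n m T : ℕ}
    (A : Fin T → Matrix (Fin n) (Fin n) ℂ)
    (B : Fin T → Matrix (Fin m) (Fin m) ℂ) :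
    ‖∑ t, (A t) ⊗ₖ (B t)ᴴ‖ ≤
      Real.sqrt ‖∑ t, (A t)ᴴ * A t‖ * Real.sqrt ‖∑ t, (B t)ᴴ * B t‖ := by
  classical
  set M : Fin T → Matrix (Fin n × Fin m) (Fin n × Fin m) ℂ :=
    fun t => (A t)ᴴ ⊗ₖ (1 : Matrix (Fin m) (Fin m) ℂ) with hM
  set N : Fin T → Matrix (Fin n × Fin m) (Fin n × Fin m) ℂ :=
    fun t => (1 : Matrix (Fin n) (Fin n) ℂ) ⊗ₖ B t with hN
  set X : Matrix (Fin n × Fin m) ((Fin T) × (Fin n × Fin m)) ℂ :=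
    Matrix.of fun p tq => M tq.1 p tq.2 with hX
  set Y : Matrix ((Fin T) × (Fin n × Fin m)) (Fin n × Fin m) ℂ :=
    Matrix.of fun tp q => N tp.1 tp.2 q with hYdef
  -- conjTransposes of the block matrices
  have hXH : Xᴴ = Matrix.of fun (tp : (Fin T) × (Fin n × Fin m)) q => (M tp.1)ᴴ tp.2 q := by
    ext p q; rfl
  have hYH : Yᴴ = Matrix.of fun p (tq : (Fin T) × (Fin n × Fin m)) => (N tq.1)ᴴ p tq.2 := by
    ext p q; rfl
  -- the three products
  have hXY : X * Y = ∑ t, (A t)ᴴ ⊗ₖ B t := by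
    rw [hX, hYdef, blockRow_mul_blockCol]
    refine Finset.sum_congr rfl fun t _ => ?_
    rw [hM, hN, ← Matrix.mul_kronecker_mul, Matrix.mul_one, Matrix.one_mul]
  have hXXH : X * Xᴴ = (∑ t, (A t)ᴴ * A t) ⊗ₖ (1 : Matrix (Fin m) (Fin m) ℂ) := by
    rw [hXH, hX, blockRow_mul_blockCol M (fun t => (M t)ᴴ), sum_kron']
    refine Finset.sum_congr rfl fun t _ => ?_
    rw [hM, kron_conjTranspose', Matrix.conjTranspose_one, Matrix.conjTranspose_conjTranspose,
      ← Matrix.mul_kronecker_mul, Matrix.one_mul]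
  have hYHY : Yᴴ * Y = (1 : Matrix (Fin n) (Fin n) ℂ) ⊗ₖ (∑ t, (B t)ᴴ * B t) := by
    rw [hYH, hYdef, blockRow_mul_blockCol (fun t => (N t)ᴴ) N, kron_sum']
    refine Finset.sum_congr rfl fun t _ => ?_
    rw [hN, kron_conjTranspose', Matrix.conjTranspose_one,
      ← Matrix.mul_kronecker_mul, Matrix.one_mul]
  -- norm bounds for X and Y
  have hXnorm : ‖X‖ ≤ Real.sqrt ‖∑ t, (A t)ᴴ * A t‖ := by
    have h1 : ‖Xᴴ‖ * ‖Xᴴ‖ = ‖X * Xᴴ‖ := by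
      rw [← Matrix.l2_opNorm_conjTranspose_mul_self Xᴴ, Matrix.conjTranspose_conjTranspose]
    have h2 : ‖X * Xᴴ‖ ≤ ‖∑ t, (A t)ᴴ * A t‖ := by
      rw [hXXH]; exact kron_one_norm_le' _
    rw [← Matrix.l2_opNorm_conjTranspose X]
    rw [Real.le_sqrt (norm_nonneg _)]
    · calc ‖Xᴴ‖ ^ 2 = ‖Xᴴ‖ * ‖Xᴴ‖ := sq ‖Xᴴ‖
        _ ≤ ‖∑ t, (A t)ᴴ * A t‖ := h1 ▸ h2
    · exact norm_nonneg _
  have hYnorm : ‖Y‖ ≤ Real.sqrt ‖∑ t, (B t)ᴴ * B t‖ := by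
    have h1 : ‖Y‖ * ‖Y‖ = ‖Yᴴ * Y‖ := (Matrix.l2_opNorm_conjTranspose_mul_self Y).symm
    have h2 : ‖Yᴴ * Y‖ ≤ ‖∑ t, (B t)ᴴ * B t‖ := by
      rw [hYHY]; exact one_kron_norm_le' _
    rw [Real.le_sqrt (norm_nonneg _)]
    · calc ‖Y‖ ^ 2 = ‖Y‖ * ‖Y‖ := sq ‖Y‖
        _ ≤ ‖∑ t, (B t)ᴴ * B t‖ := h1 ▸ h2
    · exact norm_nonneg _
  -- put everything together
  have hmain : ‖∑ t, (A t) ⊗ₖ (B t)ᴴ‖ = ‖X * Y‖ := by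
    rw [hXY, ← Matrix.l2_opNorm_conjTranspose (∑ t, (A t) ⊗ₖ (B t)ᴴ)]
    congr 1
    rw [Matrix.conjTranspose_sum]
    exact Finset.sum_congr rfl fun t _ => by
      rw [kron_conjTranspose', Matrix.conjTranspose_conjTranspose]
  rw [hmain]
  calc ‖X * Y‖ ≤ ‖X‖ * ‖Y‖ := Matrix.l2_opNorm_mul X Y
    _ ≤ Real.sqrt ‖∑ t, (A t)ᴴ * A t‖ * Real.sqrt ‖∑ t, (B t)ᴴ * B t‖ :=
        mul_le_mul hXnorm hYnorm (norm_nonneg Y) (Real.sqrt_nonneg _)
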